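/- arXiv:1710.01969 — 2 statements merged into one kernel-verified Lean document; each statement's English description precedes it below -/
import Mathlib

section
/- Let n ≥ 2, k ≥ 4 log₂ n, and let (b_i)_{0 ≤ i ≤ k-1} be integers. Then the system of equations (k - i)·y_i + (i+1)·y_{i+1} = b_i for 0 ≤ i ≤ k-1, subject to y_i ≥ 0 for all i and Σ_{i=0}^{k} y_i ≤ n, has at most one integer solution (y_0,...,y_k). -/
/-- Uniqueness (case `d = 1`): the inhomogeneous system with nonnegativity and
ℓ¹-norm constraints has at most one integer solution. -/
theorem stmt5 (n k : ℕ) (hn : 2 ≤ n) (hk : (4 : ℝ) * Real.logb 2 n ≤ k)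
    (b : ℕ → ℤ) (y y' : ℕ → ℤ)
    (hy : ∀ i < k, ((k : ℤ) - i) * y i + ((i : ℤ) + 1) * y (i + 1) = b i)
    (hy' : ∀ i < k, ((k : ℤ) - i) * y' i + ((i : ℤ) + 1) * y' (i + 1) = b i)
    (hpos : ∀ i ≤ k, 0 ≤ y i) (hpos' : ∀ i ≤ k, 0 ≤ y' i)
    (hsum : ∑ i ∈ Finset.range (k + 1), y i ≤ (n : ℤ))
    (hsum' : ∑ i ∈ Finset.range (k + 1), y' i ≤ (n : ℤ)) :
    ∀ i ≤ k, y i = y' i := by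
  have hz : ∀ i < k, ((i:ℤ)+1) * (y (i+1) - y' (i+1)) = -((k:ℤ) - i) * (y i - y' i) := by
    intro i hi
    linear_combination hy i hi - hy' i hi
  have key : ∀ i, i ≤ k → y i - y' i = (-1)^i * (k.choose i : ℤ) * (y 0 - y' 0) := by
    intro i
    induction i with
    | zero => intro _; simp
    | succ i ih =>
      intro hi
      have hik : i < k := hi
      have h2 := ih hik.le
      have hch : ((k.choose (i+1)) : ℤ) * ((i:ℤ)+1) = (k.choose i : ℤ) * ((k:ℤ) - i) := by
        have h := Nat.choose_succ_right_eq k i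
        have : ((k.choose (i+1) * (i+1) : ℕ) : ℤ) = ((k.choose i * (k - i) : ℕ) : ℤ) := by
          exact_mod_cast congrArg Nat.cast h
        push_cast [Nat.cast_sub hik.le] at this
        linarith
      have h3 : ((i:ℤ)+1) * (y (i+1) - y' (i+1))
          = ((i:ℤ)+1) * ((-1)^(i+1) * (k.choose (i+1) : ℤ) * (y 0 - y' 0)) := by
        rw [hz i hik, h2]
        linear_combination ((-1:ℤ)^i * (y 0 - y' 0)) * hch
      have hne : ((i:ℤ)+1) ≠ 0 := by positivity
      exact mul_left_cancel₀ hne h3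
  -- show y 0 = y' 0
  have h2k : (2:ℤ) * n < 2 ^ k := by
    have hn4 : (n:ℝ)^(4:ℕ) ≤ (2:ℝ)^(k:ℕ) := by
      have hnpos : (0:ℝ) < n := by positivity
      have h1 : (n:ℝ)^(4:ℕ) = (2:ℝ) ^ ((4:ℝ) * Real.logb 2 n) := by
        rw [mul_comm, Real.rpow_mul (by norm_num), Real.rpow_logb (by norm_num) (by norm_num) hnpos]
        rw [← Real.rpow_natCast (n:ℝ) 4]
        norm_num
      rw [h1, ← Real.rpow_natCast 2 k]
      exact Real.rpow_le_rpow_of_exponent_le (by norm_num) hk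
    have hn4' : (n:ℤ)^4 ≤ 2 ^ k := by exact_mod_cast hn4
    have : (2:ℤ) * n < (n:ℤ)^4 := by
      have h2n : (2:ℤ) ≤ n := by exact_mod_cast hn
      have h3 : (2:ℤ)^3 ≤ (n:ℤ)^3 := pow_le_pow_left₀ (by norm_num) h2n 3
      nlinarith [h3, h2n]
    linarith
  have h0 : y 0 = y' 0 := by
    by_contra h0
    have habs : (1:ℤ) ≤ |y 0 - y' 0| := Int.one_le_abs (sub_ne_zero.mpr h0)
    have hlow : (2:ℤ)^k ≤ ∑ i ∈ Finset.range (k+1), |y i - y' i| := by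
      have : ∑ i ∈ Finset.range (k+1), ((k.choose i : ℤ)) ≤
          ∑ i ∈ Finset.range (k+1), |y i - y' i| := by
        apply Finset.sum_le_sum
        intro i hi
        have hik : i ≤ k := Nat.lt_succ_iff.mp (Finset.mem_range.mp hi)
        rw [key i hik, abs_mul, abs_mul, abs_pow, abs_neg, abs_one, one_pow, one_mul,
          Nat.abs_cast]
        nlinarith [Nat.cast_nonneg (α := ℤ) (k.choose i), habs]
      calc (2:ℤ)^k = ∑ i ∈ Finset.range (k+1), ((k.choose i : ℤ)) := by
            exact_mod_cast (Nat.sum_range_choose k).symm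
        _ ≤ _ := this
    have hup : ∑ i ∈ Finset.range (k+1), |y i - y' i| ≤ 2 * n := by
      have : ∑ i ∈ Finset.range (k+1), |y i - y' i| ≤
          ∑ i ∈ Finset.range (k+1), (y i + y' i) := by
        apply Finset.sum_le_sum
        intro i hi
        have hik : i ≤ k := Nat.lt_succ_iff.mp (Finset.mem_range.mp hi)
        have := hpos i hik; have := hpos' i hik
        rw [abs_sub_le_iff]; constructor <;> linarith
      rw [Finset.sum_add_distrib] at this
      linarith
    linarith
  intro i hi
  have := key i hi
  rw [h0] at this
  simp at this
  linarith
end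

section
/- Let n ≥ 2, d ≥ 1, k > 4^d log₂ n − d with d ≥ 2, and suppose integers (z_e)_{e ∈ ℕ^d, |e| ≤ k} satisfy the homogeneous equations (k−|e|)·z_e + Σ_s (e_s+1)·z_{e+δ_s} = 0 for |e| ≤ k−1 and z_e = 0 whenever |e| < k₀, where k₀ = min{i : some z_e with |e| = i is nonzero}. Then the restricted variables z'_f = z_{(f_1,...,f_{d-1}, k₀−|f|)} for f ∈ ℕ^{d-1}, |f| ≤ k₀, satisfy the (d−1)-dimensional homogeneous system with parameter k₀: for all |f| ≤ k₀ − 1, (k₀ − |f|)·z'_f + Σ_{s=1}^{d-1} (f_s+1)·z'_{f+δ_s} = 0. -/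
/-- Step (a) of the induction in Lemma A.2: if `z` solves the `d`-dimensional
homogeneous system and vanishes strictly below its first nonzero level `k₀`, then
the slice `z'_f = z_{(f, k₀ - |f|)}` solves the `(d-1)`-dimensional homogeneous
system with parameter `k₀`. -/
theorem stmt18 (n d k k₀ : ℕ) (hn : 2 ≤ n) (hd : 2 ≤ d)
    (hk : (4 : ℝ) ^ d * Real.logb 2 n - d < k) (hk₀ : k₀ ≤ k)
    (z : (Fin d → ℕ) → ℤ)
    (hrec : ∀ e : Fin d → ℕ, (∑ s, e s) ≤ k - 1 →
      ((k : ℤ) - (∑ s, e s)) * z e +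
        ∑ s, ((e s : ℤ) + 1) * z (Function.update e s (e s + 1)) = 0)
    (hmin : ∀ e : Fin d → ℕ, (∑ s, e s) < k₀ → z e = 0)
    (hex : ∃ e : Fin d → ℕ, (∑ s, e s) = k₀ ∧ z e ≠ 0)
    (z' : (Fin (d - 1) → ℕ) → ℤ)
    (hz' : ∀ f : Fin (d - 1) → ℕ, z' f =
      z (fun s : Fin d => if h : (s : ℕ) < d - 1 then f ⟨s, h⟩ else k₀ - ∑ u, f u)) :
    ∀ f : Fin (d - 1) → ℕ, (∑ u, f u) < k₀ →
      ((k₀ : ℤ) - (∑ u, f u)) * z' f +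
        ∑ s, ((f s : ℤ) + 1) * z' (Function.update f s (f s + 1)) = 0 := by
  obtain ⟨m, rfl⟩ : ∃ m, d = m + 1 := ⟨d - 1, by omega⟩
  have hz2 : ∀ f : Fin m → ℕ, z' f =
      z (fun s : Fin (m + 1) => if h : (s : ℕ) < m then f ⟨s, h⟩ else k₀ - ∑ u, f u) :=
    fun f => hz' f
  show ∀ f : Fin m → ℕ, (∑ u, f u) < k₀ →
      ((k₀ : ℤ) - (∑ u, f u)) * z' f +
        ∑ s, ((f s : ℤ) + 1) * z' (Function.update f s (f s + 1)) = 0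
  intro f hf
  set e : Fin (m + 1) → ℕ :=
    fun s => if h : (s : ℕ) < m then f ⟨s, h⟩ else k₀ - 1 - ∑ u, f u with he
  have hecast : ∀ i : Fin m, e i.castSucc = f i := by
    intro i
    simp [he, i.2]
  have helast : e (Fin.last m) = k₀ - 1 - ∑ u, f u := by simp [he]
  have hsum : ∑ s, e s = k₀ - 1 := by
    rw [Fin.sum_univ_castSucc]
    simp only [hecast, helast]
    omega
  have hE := hrec e (by rw [hsum]; omega)
  rw [hsum, hmin e (by rw [hsum]; omega), mul_zero, zero_add,
    Fin.sum_univ_castSucc] at hE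
  have hAfun : Function.update e (Fin.last m) (k₀ - 1 - (∑ u, f u) + 1)
      = fun s : Fin (m + 1) => if h : (s : ℕ) < m then f ⟨s, h⟩ else k₀ - ∑ u, f u := by
    funext t
    by_cases ht : (t : ℕ) < m
    · have htne : t ≠ Fin.last m := by
        intro h; rw [h] at ht; simp at ht
      rw [Function.update_of_ne htne]
      simp [he, ht]
    · have : t = Fin.last m := by
        apply Fin.ext
        have := t.2
        simp only [Fin.val_last]
        omega
      subst this
      rw [Function.update_self]
      simp only [ht, dif_neg, not_false_iff]
      omega
  have hBfun : ∀ i : Fin m, Function.update e i.castSucc (f i + 1)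
      = fun s : Fin (m + 1) => if h : (s : ℕ) < m then Function.update f i (f i + 1) ⟨s, h⟩
          else k₀ - ∑ u, Function.update f i (f i + 1) u := by
    intro i
    have hsumu : ∑ u, Function.update f i (f i + 1) u = (∑ u, f u) + 1 := by
      rw [Finset.sum_update_of_mem (Finset.mem_univ i),
        ← Finset.add_sum_erase _ _ (Finset.mem_univ i),
        Finset.sdiff_singleton_eq_erase]
      ring
    funext t
    by_cases h1 : t = i.castSucc
    · subst h1
      rw [Function.update_self]
      have hcs : ((i.castSucc : Fin (m + 1)) : ℕ) < m := i.2
      simp only [hcs, dif_pos]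
      have : (⟨((i.castSucc : Fin (m + 1)) : ℕ), hcs⟩ : Fin m) = i := by
        apply Fin.ext; simp
      rw [this, Function.update_self]
    · rw [Function.update_of_ne h1]
      by_cases ht : (t : ℕ) < m
      · have hne : (⟨(t : ℕ), ht⟩ : Fin m) ≠ i := by
          intro h
          apply h1
          apply Fin.ext
          simp [← h]
        simp [he, ht, Function.update_of_ne hne]
      · simp only [he, ht, dif_neg, not_false_iff, hsumu]
        omega
  simp only [hecast, helast, hAfun, hBfun] at hE
  rw [hz2 f]
  simp only [hz2]
  have hco : ((k₀ : ℤ) - (∑ u, f u)) = ((k₀ - 1 - ∑ u, f u : ℕ) : ℤ) + 1 := by omega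
  rw [hco, add_comm]
  exact hE
end
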